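/- Let E ⊆ ℝ^ℓ be a convex set contained in an affine hyperplane {v : u·v = 1} for some linear functional u on ℝ^ℓ, and let ē ∈ ℝ^ℓ. Let e : Fin n → ℝ^ℓ be such that every e y is an extreme point of E, and let p : Fin n → ℝ satisfy p y > 0 for all y and ∑_y p y • e y = ē. Then the measurement f : Fin n → ℝ^ℓ defined by f y = p y • e y is an extreme point of the convex set M_n(E,ē) of n-outcome measurements if and only if the family (e y)_{y : Fin n} is linearly independent over ℝ. -/

import Mathlib

open Matrix Finset

/-- The set of `n`-outcome measurements with normalized effects in `E` and unit
effect `ebar`: families `f` such that each `f y` is a nonnegative multiple of a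
normalized effect and `∑ y, f y = ebar`. -/
def Measurements {ℓ : ℕ} (n : ℕ) (E : Set (Fin ℓ → ℝ)) (ebar : Fin ℓ → ℝ) :
    Set (Fin n → Fin ℓ → ℝ) :=
  {f | (∀ y, ∃ t : ℝ, 0 ≤ t ∧ ∃ c ∈ E, f y = t • c) ∧ ∑ y, f y = ebar}

/-- a measurement whose effects are positive multiples of
extreme points of `E` is extremal iff the normalized effects are linearly
independent. -/
theorem extremal_measurement_iff_linearIndependent
    {ℓ n : ℕ} (E : Set (Fin ℓ → ℝ)) (hE : Convex ℝ E)
    (u : (Fin ℓ → ℝ) →ₗ[ℝ] ℝ) (hu : ∀ v ∈ E, u v = 1)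
    (ebar : Fin ℓ → ℝ) (e : Fin n → Fin ℓ → ℝ)
    (he : ∀ y, e y ∈ Set.extremePoints ℝ E)
    (p : Fin n → ℝ) (hp : ∀ y, 0 < p y)
    (hsum : ∑ y, p y • e y = ebar)
    (f : Fin n → Fin ℓ → ℝ) (hf : ∀ y, f y = p y • e y) :
    f ∈ Set.extremePoints ℝ (Measurements n E ebar) ↔ LinearIndependent ℝ e := by
  have heE : ∀ y, e y ∈ E := fun y => (he y).1
  have hue : ∀ y, u (e y) = 1 := fun y => hu _ (heE y)
  have hene : ∀ y, e y ≠ 0 := by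
    intro y h
    have := hue y
    rw [h, map_zero] at this
    norm_num at this
  have hfM : f ∈ Measurements n E ebar := by
    refine ⟨fun y => ⟨p y, (hp y).le, e y, heE y, hf y⟩, ?_⟩
    rw [show (∑ y, f y) = ∑ y, p y • e y from Finset.sum_congr rfl fun y _ => hf y]
    exact hsum
  constructor
  · -- extremal → linearly independent
    intro hext
    rw [Fintype.linearIndependent_iff]
    intro d hd
    by_contra hne
    push_neg at hne
    obtain ⟨i, hi⟩ := hne
    have hdsum : ∀ (w : ℝ), ∑ y, (w * d y) • e y = 0 := by
      intro w
      have : ∑ y, (w * d y) • e y = w • ∑ y, d y • e y := by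
        rw [Finset.smul_sum]
        exact Finset.sum_congr rfl fun y _ => by rw [mul_smul]
      rw [this, hd, smul_zero]
    -- choose ε > 0 small
    set ε : ℝ := (Finset.univ.inf' ⟨i, Finset.mem_univ i⟩ fun y => p y / (|d y| + 1)) with hε
    have hεpos : 0 < ε := by
      apply Finset.lt_inf'_iff .. |>.2
      intro y _
      exact div_pos (hp y) (by positivity)
    have hεsmall : ∀ y, ε * |d y| < p y := by
      intro y
      have h1 : ε ≤ p y / (|d y| + 1) :=
        Finset.inf'_le _ (Finset.mem_univ y)
      have h2 : ε * |d y| < ε * (|d y| + 1) := by nlinarith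
      have h3 : ε * (|d y| + 1) ≤ p y := by
        rw [← le_div_iff₀ (by positivity)] at *
        exact h1
      linarith
    have habs : ∀ y, |ε * d y| < p y := by
      intro y
      rw [abs_mul, abs_of_pos hεpos]
      exact hεsmall y
    set g : Fin n → Fin ℓ → ℝ := fun y => (p y + ε * d y) • e y with hgdef
    set h : Fin n → Fin ℓ → ℝ := fun y => (p y - ε * d y) • e y with hhdef
    have hqpos : ∀ y, 0 < p y + ε * d y := by
      intro y
      have := neg_abs_le (ε * d y)
      have := habs y
      linarith
    have hrpos : ∀ y, 0 < p y - ε * d y := by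
      intro y
      have := le_abs_self (ε * d y)
      have := habs y
      linarith
    have hgM : g ∈ Measurements n E ebar := by
      refine ⟨fun y => ⟨p y + ε * d y, (hqpos y).le, e y, heE y, rfl⟩, ?_⟩
      have : ∑ y, g y = ∑ y, p y • e y + ∑ y, (ε * d y) • e y := by
        rw [← Finset.sum_add_distrib]
        exact Finset.sum_congr rfl fun y _ => add_smul (p y) (ε * d y) (e y)
      rw [this, hdsum ε, add_zero, hsum]
    have hhM : h ∈ Measurements n E ebar := by
      refine ⟨fun y => ⟨p y - ε * d y, (hrpos y).le, e y, heE y, rfl⟩, ?_⟩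
      have : ∑ y, h y = ∑ y, p y • e y - ∑ y, (ε * d y) • e y := by
        rw [← Finset.sum_sub_distrib]
        exact Finset.sum_congr rfl fun y _ => sub_smul (p y) (ε * d y) (e y)
      rw [this, hdsum ε, sub_zero, hsum]
    have hseg : f ∈ openSegment ℝ g h := by
      refine ⟨1/2, 1/2, by norm_num, by norm_num, by norm_num, ?_⟩
      funext y
      simp only [Pi.add_apply, Pi.smul_apply, hf y]
      show ((1:ℝ)/2) • ((p y + ε * d y) • e y) + ((1:ℝ)/2) • ((p y - ε * d y) • e y)
          = p y • e y
      rw [smul_smul, smul_smul, ← add_smul]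
      congr 1
      ring
    have hgf := hext.2 hgM hhM hseg
    have : (ε * d i) • e i = 0 := by
      have h1 : (p i + ε * d i) • e i = f i := congrFun hgf i
      rw [hf i, add_smul] at h1
      exact add_eq_left.1 h1
    have hεd : ε * d i ≠ 0 := mul_ne_zero hεpos.ne' hi
    exact hene i (by
      rcases smul_eq_zero.1 this with h' | h'
      · exact absurd h' hεd
      · exact h')
  · -- linearly independent → extremal
    intro hli
    refine ⟨hfM, ?_⟩
    intro g hg h hh hseg
    obtain ⟨a, b, ha, hb, hab, hcomb⟩ := hseg
    -- pointwise combination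
    have hcomby : ∀ y, a • g y + b • h y = p y • e y := by
      intro y
      have := congrFun hcomb y
      simpa [hf y] using this
    have key : ∀ y, (∃ q : ℝ, g y = q • e y) ∧ (∃ r : ℝ, h y = r • e y) := by
      intro y
      obtain ⟨s, hs, c, hc, hgc⟩ := hg.1 y
      obtain ⟨t, ht, d, hd, hhd⟩ := hh.1 y
      rcases eq_or_lt_of_le hs with hs0 | hs0
      · -- g y = 0
        have hg0 : g y = 0 := by rw [hgc, ← hs0, zero_smul]
        refine ⟨⟨0, by rw [hg0, zero_smul]⟩, ?_⟩
        have hb' : b • h y = p y • e y := by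
          have := hcomby y
          rwa [hg0, smul_zero, zero_add] at this
        exact ⟨b⁻¹ * p y, by rw [mul_smul, ← hb', inv_smul_smul₀ hb.ne']⟩
      rcases eq_or_lt_of_le ht with ht0 | ht0
      · -- h y = 0
        have hh0 : h y = 0 := by rw [hhd, ← ht0, zero_smul]
        refine ⟨?_, ⟨0, by rw [hh0, zero_smul]⟩⟩
        have ha' : a • g y = p y • e y := by
          have := hcomby y
          rwa [hh0, smul_zero, add_zero] at this
        exact ⟨a⁻¹ * p y, by rw [mul_smul, ← ha', inv_smul_smul₀ ha.ne']⟩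
      · -- both coefficients positive
        have hcoef : a * s + b * t = p y := by
          have := congrArg u (hcomby y)
          simpa [map_add, _root_.map_smul, hgc, hhd, hu c hc, hu d hd, hue y,
            smul_eq_mul, mul_one] using this
        have hcomb' : (a * s) • c + (b * t) • d = p y • e y := by
          have := hcomby y
          rw [hgc, hhd, smul_smul, smul_smul] at this
          exact this
        have hmem : e y ∈ openSegment ℝ c d := by
          refine ⟨a * s / p y, b * t / p y, div_pos (mul_pos ha hs0) (hp y),
            div_pos (mul_pos hb ht0) (hp y), ?_, ?_⟩
          · rw [← add_div, hcoef, div_self (hp y).ne']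
          · have hpne : p y ≠ 0 := (hp y).ne'
            have : (p y)⁻¹ • ((a * s) • c + (b * t) • d) = (p y)⁻¹ • (p y • e y) := by
              rw [hcomb']
            rw [inv_smul_smul₀ hpne] at this
            rw [← this]
            rw [smul_add, smul_smul, smul_smul]
            congr 1 <;> rw [div_eq_inv_mul]
        have hce := (he y).2 hc hd hmem
        have hde := (he y).2 hd hc (by rwa [openSegment_symm] at hmem)
        exact ⟨⟨s, by rw [hgc, hce]⟩, ⟨t, by rw [hhd, hde]⟩⟩
    choose q hq using fun y => (key y).1
    choose r hr using fun y => (key y).2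
    have hcoefs : ∀ (w : Fin n → ℝ) (x : Fin n → Fin ℓ → ℝ),
        x ∈ Measurements n E ebar → (∀ y, x y = w y • e y) → x = f := by
      intro w x hx hw
      have hsum' : ∑ y, (w y - p y) • e y = 0 := by
        have h1 : ∑ y, w y • e y = ebar := by
          rw [← hx.2]
          exact (Finset.sum_congr rfl fun y _ => (hw y).symm)
        have : ∑ y, (w y - p y) • e y = ∑ y, w y • e y - ∑ y, p y • e y := by
          rw [← Finset.sum_sub_distrib]
          exact Finset.sum_congr rfl fun y _ => by rw [sub_smul]
        rw [this, h1, hsum, sub_self]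
      have := Fintype.linearIndependent_iff.1 hli (fun y => w y - p y) hsum'
      funext y
      have h0 : w y - p y = 0 := this y
      have hwy : w y = p y := by linarith
      rw [hw y, hwy, ← hf y]
    exact hcoefs q g hg hq
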